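/- Suppose Ω is a Cantor group with identity ω_e that admits a minimal ℤ^d action by translations {T^n}_{n∈ℤ^d}, and f : Ω → ℝ is continuous. Define φ : Ω → ℓ∞(ℤ^d) by φ(ω) = F(ω) := (f(T^n ω))_{n∈ℤ^d}. Then φ is continuous, its image is exactly hull(F(ω_e)), φ satisfies F(ω_1) · F(ω_2) = F(ω_1 + ω_2) where · denotes the topological group structure on hull(F(ω_e)) with identity F(ω_e) (the one for which m ↦ S_m F(ω_e) is a homomorphism), and the kernel N = {ω ∈ Ω : F(ω) = F(ω_e)} is a closed subgroup of Ω with F(ω_1) = F(ω_2) if and only if ω_1 − ω_2 ∈ N. Hence hull(F(ω_e)) is isomorphic as a topological group to the quotient Ω/N. -/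

import Mathlib

open Filter Topology

/-- Translation action of `ℤ^d` on `ℓ^∞(ℤ^d)`: `(S_m V)(n) = V(n - m)`. -/
noncomputable def Sh {d : ℕ} (m : Fin d → ℤ) (V : lp (fun _ : Fin d → ℤ => ℝ) ⊤) :
    lp (fun _ : Fin d → ℤ => ℝ) ⊤ :=
  ⟨fun n => V (n - m), by
    show Memℓp (fun n : Fin d → ℤ => V (n - m)) ⊤
    have h : Memℓp (fun n : Fin d → ℤ => V n) ⊤ := lp.memℓp V
    rw [memℓp_infty_iff] at h ⊢
    have hsurj : Function.Surjective (fun n : Fin d → ℤ => n - m) :=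
      fun y => ⟨y + m, by simp⟩
    have heq : (Set.range fun n : Fin d → ℤ => ‖V (n - m)‖) =
        Set.range fun n : Fin d → ℤ => ‖V n‖ := by
      have h2 : (fun n : Fin d → ℤ => ‖V (n - m)‖) =
          (fun n => ‖V n‖) ∘ (fun n : Fin d → ℤ => n - m) := rfl
      rw [h2, Set.range_comp, hsurj.range_eq, Set.image_univ]
    rwa [heq]⟩

/-- `V ∈ ℓ^∞(ℤ^d)` is periodic if its orbit under translations is finite. -/
def PeriodicSeq {d : ℕ} (V : lp (fun _ : Fin d → ℤ => ℝ) ⊤) : Prop :=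
  (Set.range fun m : Fin d → ℤ => Sh m V).Finite

/-- `V ∈ ℓ^∞(ℤ^d)` is limit-periodic if it lies in the `ℓ^∞`-closure of the periodic
elements. -/
def LimitPeriodicSeq {d : ℕ} (V : lp (fun _ : Fin d → ℤ => ℝ) ⊤) : Prop :=
  V ∈ closure {W : lp (fun _ : Fin d → ℤ => ℝ) ⊤ | PeriodicSeq W}

/-- The hull of `V ∈ ℓ^∞(ℤ^d)`: the closure of its translation orbit. -/
noncomputable def hullSet {d : ℕ} (V : lp (fun _ : Fin d → ℤ => ℝ) ⊤) :
    Set (lp (fun _ : Fin d → ℤ => ℝ) ⊤) :=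
  closure (Set.range fun m : Fin d → ℤ => Sh m V)

section Aux

open scoped Uniformity

variable {d : ℕ} {Ω : Type} [TopologicalSpace Ω] [AddCommGroup Ω]
  [IsTopologicalAddGroup Ω] [CompactSpace Ω]

/-- Uniform continuity of a continuous function on a compact abelian topological group,
stated in group terms. -/
theorem my_unif_cont (f : C(Ω, ℝ)) {ε : ℝ} (hε : 0 < ε) :
    ∃ U ∈ 𝓝 (0 : Ω), ∀ x y : Ω, y - x ∈ U → dist (f x) (f y) < ε := by
  letI : UniformSpace Ω := IsTopologicalAddGroup.rightUniformSpace Ω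
  haveI : IsUniformAddGroup Ω := isUniformAddGroup_of_addCommGroup
  have huc : UniformContinuous f := CompactSpace.uniformContinuous_of_continuous f.continuous
  have hmem : {p : ℝ × ℝ | dist p.1 p.2 < ε} ∈ 𝓤 ℝ := Metric.dist_mem_uniformity hε
  have h2 : (fun p : Ω × Ω => (f p.1, f p.2)) ⁻¹' {p : ℝ × ℝ | dist p.1 p.2 < ε} ∈ 𝓤 Ω :=
    huc hmem
  rw [uniformity_eq_comap_nhds_zero' Ω] at h2
  obtain ⟨U, hU, hUsub⟩ := Filter.mem_comap.mp h2
  exact ⟨U, hU, fun x y hxy => hUsub (show ((x, y) : Ω × Ω) ∈ _ from by simpa [sub_eq_add_neg] using hxy)⟩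

end Aux

set_option maxHeartbeats 1000000 in
set_option synthInstance.maxHeartbeats 400000 in
/-- Let `Ω` be a Cantor group with a minimal `ℤ^d` action by
translations and `f : Ω → ℝ` continuous; let `F(ω) = (f(T^n ω))_n ∈ ℓ^∞(ℤ^d)`. Then `F`
is continuous, its image is exactly `hull(F(0))`, `F` intertwines addition on `Ω` with the
group structure on the hull (the one for which `m ↦ S_m F(0)` is a homomorphism), the
kernel `N = {ω : F ω = F 0}` is a closed subgroup, `F ω₁ = F ω₂ ↔ ω₁ − ω₂ ∈ N`, and
`hull(F(0))` is isomorphic as a topological group to `Ω ⧸ N`. -/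
theorem hull_is_quotient_group (d : ℕ) (Ω : Type) [TopologicalSpace Ω] [AddCommGroup Ω]
    [IsTopologicalAddGroup Ω] [CompactSpace Ω] [TotallyDisconnectedSpace Ω]
    [TopologicalSpace.MetrizableSpace Ω] [Infinite Ω]
    (α : Fin d → Ω)
    (hmin : ∀ ω : Ω, Dense (Set.range fun n : Fin d → ℤ => ω + ∑ j, n j • α j))
    (f : C(Ω, ℝ)) (F : Ω → lp (fun _ : Fin d → ℤ => ℝ) ⊤)
    (hF : ∀ (ω : Ω) (n : Fin d → ℤ), F ω n = f (ω + ∑ j, n j • α j)) :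
    Continuous F ∧
    Set.range F = hullSet (F 0) ∧
    IsClosed {ω : Ω | F ω = F 0} ∧
    ∃ N : AddSubgroup Ω, (N : Set Ω) = {ω : Ω | F ω = F 0} ∧
      (∀ ω₁ ω₂ : Ω, F ω₁ = F ω₂ ↔ ω₁ - ω₂ ∈ N) ∧
      -- for the topological group structure on the hull for which `m ↦ S_m F(0)` is a
      -- homomorphism:
      ∀ mul : hullSet (F 0) → hullSet (F 0) → hullSet (F 0),
        Continuous (fun q : hullSet (F 0) × hullSet (F 0) => mul q.1 q.2) →
        (∀ (m k : Fin d → ℤ) (hm : Sh m (F 0) ∈ hullSet (F 0))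
          (hk : Sh k (F 0) ∈ hullSet (F 0)) (hmk : Sh (m + k) (F 0) ∈ hullSet (F 0)),
          mul ⟨Sh m (F 0), hm⟩ ⟨Sh k (F 0), hk⟩ = ⟨Sh (m + k) (F 0), hmk⟩) →
        -- `F(ω₁) ⋆ F(ω₂) = F(ω₁ + ω₂)`
        (∀ (ω₁ ω₂ : Ω) (h₁ : F ω₁ ∈ hullSet (F 0)) (h₂ : F ω₂ ∈ hullSet (F 0))
          (h₃ : F (ω₁ + ω₂) ∈ hullSet (F 0)),
          mul ⟨F ω₁, h₁⟩ ⟨F ω₂, h₂⟩ = ⟨F (ω₁ + ω₂), h₃⟩) ∧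
        -- `hull(F 0) ≅ Ω ⧸ N` as topological groups
        ∃ ψ : (Ω ⧸ N) ≃ₜ hullSet (F 0),
          (∀ ω : Ω, ((ψ (QuotientAddGroup.mk ω) : hullSet (F 0)) :
              lp (fun _ : Fin d → ℤ => ℝ) ⊤) = F ω) ∧
          (∀ a b : Ω ⧸ N, ψ (a + b) = mul (ψ a) (ψ b)) := by
  classical
  set s : (Fin d → ℤ) → Ω := fun m => ∑ j, m j • α j with hs
  have s_add : ∀ m k : Fin d → ℤ, s (m + k) = s m + s k := by
    intro m k
    simp only [hs, Pi.add_apply, add_zsmul]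
    rw [Finset.sum_add_distrib]
  have s_neg : ∀ m : Fin d → ℤ, s (-m) = -s m := by
    intro m
    simp only [hs, Pi.neg_apply, neg_zsmul, Finset.sum_neg_distrib]
  have s_sub : ∀ m k : Fin d → ℤ, s (m - k) = s m - s k := by
    intro m k
    rw [sub_eq_add_neg, s_add, s_neg, sub_eq_add_neg]
  have hF' : ∀ (ω : Ω) (n : Fin d → ℤ), F ω n = f (ω + s n) := hF
  have hSh : ∀ (m : Fin d → ℤ) (ω : Ω), Sh m (F ω) = F (ω - s m) := by
    intro m ω
    apply Subtype.ext
    funext n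
    show F ω (n - m) = F (ω - s m) n
    rw [hF', hF', s_sub]
    congr 1
    abel
  have hFs : ∀ n : Fin d → ℤ, F (s n) = Sh (-n) (F 0) := by
    intro n
    rw [hSh, s_neg, zero_sub, neg_neg]
  -- continuity of F
  have hcont : Continuous F := by
    rw [continuous_iff_continuousAt]
    intro ω₀
    rw [ContinuousAt, Metric.tendsto_nhds]
    intro ε hε
    obtain ⟨U, hU, hUf⟩ := my_unif_cont f (half_pos hε)
    have htend : Filter.Tendsto (fun ω : Ω => ω - ω₀) (𝓝 ω₀) (𝓝 0) := by
      have h1 : Filter.Tendsto (fun ω : Ω => ω - ω₀) (𝓝 ω₀) (𝓝 (ω₀ - ω₀)) :=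
        (continuous_id.sub continuous_const).tendsto ω₀
      simpa using h1
    filter_upwards [htend hU] with ω hω
    have hd : dist (F ω) (F ω₀) ≤ ε / 2 := by
      rw [dist_eq_norm]
      refine lp.norm_le_of_forall_le (le_of_lt (half_pos hε)) ?_
      intro n
      have he : (F ω - F ω₀ : lp (fun _ : Fin d → ℤ => ℝ) ⊤) n = F ω n - F ω₀ n := by
        simp
      rw [he, hF', hF']
      have hmem : (ω + s n) - (ω₀ + s n) ∈ U := by
        have : (ω + s n) - (ω₀ + s n) = ω - ω₀ := by abel
        rwa [this]
      have := hUf (ω₀ + s n) (ω + s n) hmem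
      rw [Real.dist_eq] at this
      rw [Real.norm_eq_abs, abs_sub_comm]
      exact le_of_lt this
    exact lt_of_le_of_lt hd (half_lt_self hε)
  -- density of the orbit of 0
  have hdense : Dense (Set.range s) := by
    have := hmin 0
    simpa [hs] using this
  -- range F = hull
  have memF : ∀ ω : Ω, F ω ∈ hullSet (F 0) := by
    intro ω
    have h1 : ω ∈ closure (Set.range s) := hdense ω
    have h2 : F ω ∈ closure (F '' Set.range s) :=
      image_closure_subset_closure_image hcont ⟨ω, h1, rfl⟩
    refine closure_mono ?_ h2
    rintro _ ⟨_, ⟨n, rfl⟩, rfl⟩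
    exact ⟨-n, (hFs n).symm⟩
  have hrange : Set.range F = hullSet (F 0) := by
    apply Set.Subset.antisymm
    · rintro _ ⟨ω, rfl⟩; exact memF ω
    · have hclosed : IsClosed (Set.range F) := (isCompact_range hcont).isClosed
      refine closure_minimal ?_ hclosed
      rintro _ ⟨m, rfl⟩
      exact ⟨0 - s m, (hSh m 0).symm⟩
  -- translation invariance of fibers
  have Ftrans : ∀ ω₁ ω₂ : Ω, F ω₁ = F ω₂ → ∀ ω : Ω, F (ω₁ + ω) = F (ω₂ + ω) := by
    intro ω₁ ω₂ h ω
    have hC : IsClosed {x : Ω | F (ω₁ + x) = F (ω₂ + x)} :=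
      isClosed_eq (hcont.comp (continuous_const.add continuous_id))
        (hcont.comp (continuous_const.add continuous_id))
    have hsub : Set.range s ⊆ {x : Ω | F (ω₁ + x) = F (ω₂ + x)} := by
      rintro _ ⟨n, rfl⟩
      show F (ω₁ + s n) = F (ω₂ + s n)
      have he : ∀ ωa : Ω, F (ωa + s n) = Sh (-n) (F ωa) := by
        intro ωa
        rw [hSh, s_neg, sub_neg_eq_add]
      rw [he, he, h]
    have huniv : (Set.univ : Set Ω) ⊆ {x : Ω | F (ω₁ + x) = F (ω₂ + x)} := by
      rw [← hdense.closure_eq]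
      exact closure_minimal hsub hC
    exact huniv (Set.mem_univ ω)
  -- the subgroup N
  refine ⟨hcont, hrange, isClosed_eq hcont continuous_const, ?_⟩
  set N : AddSubgroup Ω :=
    { carrier := {ω : Ω | F ω = F 0}
      zero_mem' := rfl
      add_mem' := by
        intro a b ha hb
        have h1 := Ftrans a 0 ha b
        rw [zero_add] at h1
        exact h1.trans hb
      neg_mem' := by
        intro a ha
        have h1 := Ftrans a 0 ha (-a)
        rw [zero_add, add_neg_cancel] at h1
        exact h1.symm } with hNdef
  have hNmem : ∀ ω : Ω, ω ∈ N ↔ F ω = F 0 := fun ω => Iff.rfl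
  have hiff : ∀ ω₁ ω₂ : Ω, F ω₁ = F ω₂ ↔ ω₁ - ω₂ ∈ N := by
    intro ω₁ ω₂
    constructor
    · intro h
      rw [hNmem]
      have h1 := Ftrans ω₁ ω₂ h (-ω₂)
      rwa [add_neg_cancel, ← sub_eq_add_neg] at h1
    · intro h
      rw [hNmem] at h
      have h1 := Ftrans (ω₁ - ω₂) 0 h ω₂
      rwa [zero_add, sub_add_cancel] at h1
  refine ⟨N, rfl, hiff, ?_⟩
  intro mul hmulc hmulSh
  -- the key multiplication identity
  have keymul : ∀ ω₁ ω₂ : Ω,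
      mul ⟨F ω₁, memF ω₁⟩ ⟨F ω₂, memF ω₂⟩ = ⟨F (ω₁ + ω₂), memF (ω₁ + ω₂)⟩ := by
    have hGc : Continuous (fun p : Ω × Ω =>
        mul ⟨F p.1, memF p.1⟩ ⟨F p.2, memF p.2⟩) := by
      exact hmulc.comp (Continuous.prodMk
        (Continuous.subtype_mk (hcont.comp continuous_fst) _)
        (Continuous.subtype_mk (hcont.comp continuous_snd) _))
    have hHc : Continuous (fun p : Ω × Ω =>
        (⟨F (p.1 + p.2), memF (p.1 + p.2)⟩ : hullSet (F 0))) :=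
      Continuous.subtype_mk (hcont.comp (continuous_fst.add continuous_snd)) _
    have hC : IsClosed {p : Ω × Ω |
        mul ⟨F p.1, memF p.1⟩ ⟨F p.2, memF p.2⟩ =
          (⟨F (p.1 + p.2), memF (p.1 + p.2)⟩ : hullSet (F 0))} :=
      isClosed_eq hGc hHc
    have hsub : (Set.range s) ×ˢ (Set.range s) ⊆ {p : Ω × Ω |
        mul ⟨F p.1, memF p.1⟩ ⟨F p.2, memF p.2⟩ =
          (⟨F (p.1 + p.2), memF (p.1 + p.2)⟩ : hullSet (F 0))} := by
      rintro ⟨x, y⟩ ⟨⟨m, rfl⟩, ⟨k, rfl⟩⟩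
      show mul ⟨F (s m), _⟩ ⟨F (s k), _⟩ = (⟨F (s m + s k), _⟩ : hullSet (F 0))
      have hm : Sh (-m) (F 0) ∈ hullSet (F 0) := (hFs m) ▸ memF (s m)
      have hk : Sh (-k) (F 0) ∈ hullSet (F 0) := (hFs k) ▸ memF (s k)
      have hmk : Sh (-m + -k) (F 0) ∈ hullSet (F 0) := by
        have : -m + -k = -(m + k) := by ring
        rw [this]
        exact (hFs (m + k)) ▸ memF (s (m + k))
      have h1 : (⟨F (s m), memF (s m)⟩ : hullSet (F 0)) = ⟨Sh (-m) (F 0), hm⟩ :=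
        Subtype.ext (hFs m)
      have h2 : (⟨F (s k), memF (s k)⟩ : hullSet (F 0)) = ⟨Sh (-k) (F 0), hk⟩ :=
        Subtype.ext (hFs k)
      have h3 : (⟨F (s m + s k), memF (s m + s k)⟩ : hullSet (F 0)) =
          ⟨Sh (-m + -k) (F 0), hmk⟩ := by
        apply Subtype.ext
        show F (s m + s k) = Sh (-m + -k) (F 0)
        have hnk : -m + -k = -(m + k) := by ring
        rw [hnk, ← hFs, ← s_add]
      rw [h1, h2, h3]
      exact hmulSh (-m) (-k) hm hk hmk
    have hdp : Dense ((Set.range s) ×ˢ (Set.range s)) := hdense.prod hdense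
    have huniv : (Set.univ : Set (Ω × Ω)) ⊆ {p : Ω × Ω |
        mul ⟨F p.1, memF p.1⟩ ⟨F p.2, memF p.2⟩ =
          (⟨F (p.1 + p.2), memF (p.1 + p.2)⟩ : hullSet (F 0))} := by
      rw [← hdp.closure_eq]
      exact closure_minimal hsub hC
    intro ω₁ ω₂
    exact huniv (Set.mem_univ (ω₁, ω₂))
  refine ⟨fun ω₁ ω₂ h₁ h₂ h₃ => keymul ω₁ ω₂, ?_⟩
  -- the homeomorphism with the quotient group
  have hwd : ∀ a b : Ω, QuotientAddGroup.leftRel N a b →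
      (⟨F a, memF a⟩ : hullSet (F 0)) = ⟨F b, memF b⟩ := by
    intro a b hab
    rw [QuotientAddGroup.leftRel_apply] at hab
    have hba : b - a ∈ N := by rwa [sub_eq_neg_add]
    exact Subtype.ext ((hiff b a).mpr hba).symm
  let e : Ω ⧸ N → hullSet (F 0) := Quotient.lift (fun ω => ⟨F ω, memF ω⟩) hwd
  have he_mk : ∀ ω : Ω, e (QuotientAddGroup.mk ω) = ⟨F ω, memF ω⟩ := fun ω => rfl
  have hbij : Function.Bijective e := by
    constructor
    · intro a b
      refine Quotient.inductionOn₂ a b ?_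
      intro x y h
      have hFxy : F x = F y := congrArg Subtype.val h
      have hxy : x - y ∈ N := (hiff x y).mp hFxy
      apply Quotient.sound
      have hyx : -(x - y) ∈ N := neg_mem hxy
      rw [neg_sub, sub_eq_neg_add] at hyx
      exact QuotientAddGroup.leftRel_apply.mpr hyx
    · intro z
      have hz : (z : lp (fun _ : Fin d → ℤ => ℝ) ⊤) ∈ Set.range F := by
        rw [hrange]; exact z.2
      obtain ⟨ω, hω⟩ := hz
      exact ⟨QuotientAddGroup.mk ω, Subtype.ext hω⟩
  have hec : Continuous e :=
    Continuous.quotient_lift (Continuous.subtype_mk hcont _) hwd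
  let ψ : (Ω ⧸ N) ≃ₜ hullSet (F 0) :=
    Continuous.homeoOfEquivCompactToT2 (f := Equiv.ofBijective e hbij) hec
  refine ⟨ψ, fun ω => rfl, ?_⟩
  intro a b
  refine Quotient.inductionOn₂ a b ?_
  intro x y
  show e (QuotientAddGroup.mk x + QuotientAddGroup.mk y) =
    mul (e (QuotientAddGroup.mk x)) (e (QuotientAddGroup.mk y))
  have hq : QuotientAddGroup.mk x + QuotientAddGroup.mk y =
      (QuotientAddGroup.mk (x + y) : Ω ⧸ N) := rfl
  rw [hq, he_mk, he_mk, he_mk]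
  exact (keymul x y).symm
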